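/- arXiv:1506.00926 — 2 statements merged into one kernel-verified Lean document; each statement's English description precedes it below -/
import Mathlib

section
/- Pohozaev identity for harmonic maps with free boundary on the half-disc: Let n ≥ 2 and let u be a smooth harmonic map with free boundary on 𝔻⁺ ∪ I with values in ℝ^{n+1}. Then for every 0 < r < 1, ∫₀^π |∂_θ[θ ↦ u(r cos θ, r sin θ)]|² dθ = r² ∫₀^π |∂_ρ u(r cos θ, r sin θ)|² dθ, where ∂_ρ u denotes the radial directional derivative of u. -/
open MeasureTheory Filter Topology Set
open scoped RealInnerProductSpace

noncomputable section

/-- The Euclidean plane. -/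
abbrev E2 : Type := EuclideanSpace ℝ (Fin 2)
/-- Euclidean space `ℝ^{n+1}`. -/
abbrev Ey (n : ℕ) : Type := EuclideanSpace ℝ (Fin (n + 1))

/-- Standard basis vectors of the plane. -/
def e2 (i : Fin 2) : E2 := EuclideanSpace.single i 1

/-- The point of the plane with coordinates `(s, t)`. -/
def pt (s t : ℝ) : E2 := WithLp.toLp 2 ![s, t]

/-- The Laplacian of a map on the plane. -/
def lapl {F : Type*} [NormedAddCommGroup F] [NormedSpace ℝ F] (u : E2 → F) (x : E2) : F :=
  ∑ i : Fin 2, fderiv ℝ (fun y => fderiv ℝ u y (e2 i)) x (e2 i)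

/-- The squared (Frobenius) norm `|∇u|² = Σ_j |∇u_j|²` of the gradient. -/
def gradSq {F : Type*} [NormedAddCommGroup F] [NormedSpace ℝ F] (u : E2 → F) (x : E2) : ℝ :=
  ∑ i : Fin 2, ‖fderiv ℝ u x (e2 i)‖ ^ 2

/-- The open half-disc `𝔻⁺_ρ` of radius `ρ`. -/
def halfDisc (ρ : ℝ) : Set E2 := {x | x 0 ^ 2 + x 1 ^ 2 < ρ ^ 2 ∧ 0 < x 1}

/-- The closed half-disc of radius `ρ`. -/
def closedHalfDisc (ρ : ℝ) : Set E2 := {x | x 0 ^ 2 + x 1 ^ 2 ≤ ρ ^ 2 ∧ 0 ≤ x 1}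

/-- The boundary segment `I = (-1,1) × {0}`. -/
def Iseg : Set E2 := {x | |x 0| < 1 ∧ x 1 = 0}

/-- A smooth harmonic map with free boundary on `𝔻⁺ ∪ I`, i.e. a map smooth on a
neighbourhood of the closed half-disc, harmonic in `𝔻⁺`, with values in the closed unit
ball, unit norm on `I`, where `∂_t u` is parallel to `u` on `I`. -/
structure IsFBHarmonic (n : ℕ) (u : E2 → Ey n) : Prop where
  smooth : ∃ V : Set E2, IsOpen V ∧ closedHalfDisc 1 ⊆ V ∧ ContDiffOn ℝ (⊤ : ℕ∞) u V
  harmonic : ∀ x ∈ halfDisc 1, lapl u x = 0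
  norm_le : ∀ x ∈ closedHalfDisc 1, ‖u x‖ ≤ 1
  norm_eq : ∀ x ∈ Iseg, ‖u x‖ = 1
  free : ∀ x ∈ Iseg, ∃ c : ℝ, fderiv ℝ u x (e2 1) = c • u x

/-- The radial directional derivative `∂_ρ u(z) = (z/|z|) ⬝ ∇u(z)`. -/
def radialDeriv {n : ℕ} (u : E2 → Ey n) (z : E2) : Ey n :=
  fderiv ℝ u z (‖z‖⁻¹ • z)

/-! ### Auxiliary material for the proof -/

set_option maxHeartbeats 1000000

lemma pt_eq (s t : ℝ) : pt s t = s • e2 0 + t • e2 1 := by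
  ext i
  fin_cases i <;>
    simp [pt, e2, EuclideanSpace.single_apply, PiLp.add_apply, PiLp.smul_apply]

/-- The inclusion of `ℂ` into the Euclidean plane as a continuous `ℝ`-linear map. -/
def CL : ℂ →L[ℝ] E2 :=
  ((PiLp.continuousLinearEquiv 2 ℝ (fun _ : Fin 2 => ℝ)).symm.toContinuousLinearMap).comp
    (ContinuousLinearMap.pi ![Complex.reCLM, Complex.imCLM])

lemma CL_apply (w : ℂ) : CL w = pt w.re w.im := by
  ext i; fin_cases i <;> rfl

lemma CL_one : CL 1 = e2 0 := by rw [CL_apply]; simp [pt_eq]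

lemma CL_I : CL Complex.I = e2 1 := by rw [CL_apply]; simp [pt_eq]

/-- The Hopf differential of `u`, as a function of a complex variable. -/
def phiH {n : ℕ} (u : E2 → Ey n) (z : ℂ) : ℂ :=
  ((⟪fderiv ℝ u (CL z) (e2 0), fderiv ℝ u (CL z) (e2 0)⟫
      - ⟪fderiv ℝ u (CL z) (e2 1), fderiv ℝ u (CL z) (e2 1)⟫ : ℝ) : ℂ)
    - (2 * ⟪fderiv ℝ u (CL z) (e2 0), fderiv ℝ u (CL z) (e2 1)⟫ : ℝ) • Complex.I

lemma exp_re_im (x θ : ℝ) : Complex.exp (↑x + ↑θ * Complex.I)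
    = ↑(Real.exp x * Real.cos θ) + ↑(Real.exp x * Real.sin θ) * Complex.I := by
  rw [Complex.exp_add, ← Complex.ofReal_exp, Complex.exp_mul_I, ← Complex.ofReal_cos,
    ← Complex.ofReal_sin]
  push_cast
  ring

/-- The Hopf differential is holomorphic where `u` is harmonic. -/
lemma phi_diff {n : ℕ} {u : E2 → Ey n} {V : Set E2} (hV : IsOpen V)
    (hC : ContDiffOn ℝ (⊤ : ℕ∞) u V) {z : ℂ} (hz : CL z ∈ V)
    (hlap : lapl u (CL z) = 0) : DifferentiableAt ℂ (phiH u) z := by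
  set x := CL z with hx
  have hcda : ContDiffAt ℝ (⊤ : ℕ∞) u x := (hC x hz).contDiffAt (hV.mem_nhds hz)
  have hU : ContDiffAt ℝ (⊤ : ℕ∞) (fderiv ℝ u) x :=
    hcda.fderiv_right (le_of_eq (by exact_mod_cast rfl))
  have hUd : DifferentiableAt ℝ (fderiv ℝ u) x :=
    hU.differentiableAt (by simp)
  set H : E2 →L[ℝ] E2 →L[ℝ] Ey n := fderiv ℝ (fderiv ℝ u) x with hH
  have hsym : ∀ v w : E2, H v w = H w v := fun v w =>
    hcda.isSymmSndFDerivAt (by rw [minSmoothness_of_isRCLikeNormedField]; exact WithTop.coe_le_coe.mpr (le_top : (2:ℕ∞) ≤ ⊤)) v w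
  have happ : ∀ i : Fin 2, fderiv ℝ (fun y => fderiv ℝ u y (e2 i)) x
      = (ContinuousLinearMap.apply ℝ (Ey n) (e2 i)).comp H := by
    intro i
    have h : HasFDerivAt (fun y => fderiv ℝ u y (e2 i))
        ((ContinuousLinearMap.apply ℝ (Ey n) (e2 i)).comp H) x :=
      (ContinuousLinearMap.apply ℝ (Ey n) (e2 i)).hasFDerivAt.comp x hUd.hasFDerivAt
    exact h.fderiv
  have hharm : H (e2 1) (e2 1) = -(H (e2 0) (e2 0)) := by
    have h0 := hlap
    simp only [lapl, Fin.sum_univ_two, happ 0, happ 1, ContinuousLinearMap.comp_apply,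
      ContinuousLinearMap.apply_apply] at h0
    exact eq_neg_of_add_eq_zero_right h0
  set A : ℂ →L[ℝ] Ey n := (ContinuousLinearMap.apply ℝ (Ey n) (e2 0)).comp (H.comp CL) with hA
  set B : ℂ →L[ℝ] Ey n := (ContinuousLinearMap.apply ℝ (Ey n) (e2 1)).comp (H.comp CL) with hB
  have hUc : HasFDerivAt (fun w : ℂ => fderiv ℝ u (CL w)) (H.comp CL) z :=
    (hUd.hasFDerivAt).comp z CL.hasFDerivAt
  have haf : HasFDerivAt (fun w : ℂ => fderiv ℝ u (CL w) (e2 0)) A z :=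
    (ContinuousLinearMap.apply ℝ (Ey n) (e2 0)).hasFDerivAt.comp z hUc
  have hbf : HasFDerivAt (fun w : ℂ => fderiv ℝ u (CL w) (e2 1)) B z :=
    (ContinuousLinearMap.apply ℝ (Ey n) (e2 1)).hasFDerivAt.comp z hUc
  set a0 : Ey n := fderiv ℝ u x (e2 0) with ha0
  set b0 : Ey n := fderiv ℝ u x (e2 1) with hb0
  set D1 : ℂ →L[ℝ] ℝ := (fderivInnerCLM ℝ (a0, a0)).comp (A.prod A) with hD1
  set D2 : ℂ →L[ℝ] ℝ := (fderivInnerCLM ℝ (b0, b0)).comp (B.prod B) with hD2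
  set D3 : ℂ →L[ℝ] ℝ := (fderivInnerCLM ℝ (a0, b0)).comp (A.prod B) with hD3
  have h1 : HasFDerivAt (fun w : ℂ =>
      ⟪fderiv ℝ u (CL w) (e2 0), fderiv ℝ u (CL w) (e2 0)⟫) D1 z := haf.inner ℝ haf
  have h2 : HasFDerivAt (fun w : ℂ =>
      ⟪fderiv ℝ u (CL w) (e2 1), fderiv ℝ u (CL w) (e2 1)⟫) D2 z := hbf.inner ℝ hbf
  have h3 : HasFDerivAt (fun w : ℂ =>
      ⟪fderiv ℝ u (CL w) (e2 0), fderiv ℝ u (CL w) (e2 1)⟫) D3 z := haf.inner ℝ hbf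
  set L : ℂ →L[ℝ] ℂ :=
    Complex.ofRealCLM.comp (D1 - D2) - ((2 : ℝ) • D3).smulRight Complex.I with hL
  have hphi : HasFDerivAt (phiH u) L z := by
    have hP : HasFDerivAt (fun w : ℂ =>
        ((⟪fderiv ℝ u (CL w) (e2 0), fderiv ℝ u (CL w) (e2 0)⟫
          - ⟪fderiv ℝ u (CL w) (e2 1), fderiv ℝ u (CL w) (e2 1)⟫ : ℝ) : ℂ))
        (Complex.ofRealCLM.comp (D1 - D2)) z :=
      Complex.ofRealCLM.hasFDerivAt.comp z (h1.sub h2)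
    have hQ : HasFDerivAt (fun w : ℂ =>
        (2 * ⟪fderiv ℝ u (CL w) (e2 0), fderiv ℝ u (CL w) (e2 1)⟫ : ℝ) • Complex.I)
        (((2 : ℝ) • D3).smulRight Complex.I) z := (h3.const_mul (2:ℝ)).smul_const Complex.I
    exact hP.sub hQ
  have hLv : ∀ v : ℂ, L v =
      ((⟪a0, A v⟫ + ⟪A v, a0⟫ - (⟪b0, B v⟫ + ⟪B v, b0⟫) : ℝ) : ℂ)
        - ((2 : ℝ) * (⟪a0, B v⟫ + ⟪A v, b0⟫)) • Complex.I := by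
    intro v
    simp [hL, hD1, hD2, hD3, ContinuousLinearMap.comp_apply, ContinuousLinearMap.sub_apply,
      ContinuousLinearMap.smulRight_apply, ContinuousLinearMap.smul_apply,
      ContinuousLinearMap.prod_apply, fderivInnerCLM_apply]
  have hAv : ∀ v : ℂ, A v = H (CL v) (e2 0) := fun v => rfl
  have hBv : ∀ v : ℂ, B v = H (CL v) (e2 1) := fun v => rfl
  have hCR : L Complex.I = Complex.I * L 1 := by
    rw [hLv, hLv]
    rw [hAv, hBv, hAv, hBv, CL_one, CL_I, hsym (e2 1) (e2 0), hharm]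
    apply Complex.ext <;>
      simp [Complex.smul_re, Complex.smul_im, inner_neg_right, inner_neg_left,
        real_inner_comm b0, real_inner_comm a0] <;> ring
  refine ⟨(L 1) • (1 : ℂ →L[ℂ] ℂ), hasFDerivAt_of_restrictScalars ℝ hphi ?_⟩
  ext v
  have hv : v = v.re • (1:ℂ) + v.im • Complex.I := by
    simp [Complex.real_smul, Complex.re_add_im]
  simp only [ContinuousLinearMap.coe_restrictScalars', ContinuousLinearMap.smul_apply,
    ContinuousLinearMap.one_apply]
  calc L 1 • v = L 1 * v := rfl
    _ = L v := by
        conv_rhs => rw [hv]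
        rw [map_add, L.map_smul, L.map_smul, hCR]
        simp [Complex.real_smul]
        conv_lhs => rw [← Complex.re_add_im v]
        ring

/-- On the free boundary, `∂_s u` is orthogonal to `∂_t u`. -/
lemma inner_ab_zero {n : ℕ} {u : E2 → Ey n} {V : Set E2} (hV : IsOpen V) (hI : Iseg ⊆ V)
    (hC : ContDiffOn ℝ (⊤ : ℕ∞) u V)
    (hnorm : ∀ x ∈ Iseg, ‖u x‖ = 1)
    (hfree : ∀ x ∈ Iseg, ∃ c : ℝ, fderiv ℝ u x (e2 1) = c • u x)
    {x : E2} (hx : x ∈ Iseg) :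
    ⟪fderiv ℝ u x (e2 0), fderiv ℝ u x (e2 1)⟫ = 0 := by
  obtain ⟨c, hc⟩ := hfree x hx
  suffices h : ⟪fderiv ℝ u x (e2 0), u x⟫ = 0 by
    rw [hc, real_inner_smul_right, h, mul_zero]
  set s0 := x 0 with hs0
  have hxeq : x = pt s0 0 := by
    ext i
    fin_cases i
    · rfl
    · exact hx.2
  have hxV : x ∈ V := hI hx
  have hud : DifferentiableAt ℝ u x :=
    (((hC x hxV).contDiffAt (hV.mem_nhds hxV)).differentiableAt
      (by simp))
  have hline : HasDerivAt (fun s : ℝ => pt s 0) (e2 0) s0 := by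
    simp only [pt_eq]
    have h := (hasDerivAt_id s0).smul_const (e2 0)
    simpa using h.add_const ((0:ℝ) • e2 1)
  have hud' : HasFDerivAt u (fderiv ℝ u x) (pt s0 0) := hxeq ▸ hud.hasFDerivAt
  have hcomp : HasDerivAt (fun s => u (pt s 0)) (fderiv ℝ u x (e2 0)) s0 :=
    hud'.comp_hasDerivAt s0 hline
  have hInner : HasDerivAt (fun s => ⟪u (pt s 0), u (pt s 0)⟫)
      (⟪u (pt s0 0), fderiv ℝ u x (e2 0)⟫ + ⟪fderiv ℝ u x (e2 0), u (pt s0 0)⟫) s0 :=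
    hcomp.inner ℝ hcomp
  have hev : (fun s => ⟪u (pt s 0), u (pt s 0)⟫) =ᶠ[𝓝 s0] fun _ => (1:ℝ) := by
    have hop : IsOpen {s : ℝ | |s| < 1} := isOpen_lt (continuous_abs) continuous_const
    have h1 : s0 ∈ {s : ℝ | |s| < 1} := hx.1
    filter_upwards [hop.mem_nhds h1] with s hs
    have hmem : pt s 0 ∈ Iseg := by
      constructor
      · show |pt s 0 0| < 1
        simpa [pt] using hs
      · simp [pt]
    have := hnorm _ hmem
    rw [real_inner_self_eq_norm_sq, this]
    norm_num
  have hzero : (⟪u (pt s0 0), fderiv ℝ u x (e2 0)⟫ + ⟪fderiv ℝ u x (e2 0), u (pt s0 0)⟫) = 0 := by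
    have h2 : HasDerivAt (fun _ : ℝ => (1:ℝ))
        (⟪u (pt s0 0), fderiv ℝ u x (e2 0)⟫ + ⟪fderiv ℝ u x (e2 0), u (pt s0 0)⟫) s0 :=
      hInner.congr_of_eventuallyEq hev.symm
    exact h2.unique (hasDerivAt_const s0 1)
  rw [← hxeq] at hzero
  rw [real_inner_comm (u x) (fderiv ℝ u x (e2 0))] at hzero
  have hcomm := real_inner_comm (fderiv ℝ u x (e2 0)) (u x)
  linarith

lemma im_sq_mul_phiH {n : ℕ} {u : E2 → Ey n} {ζ : ℂ} (hζ : ζ.im = 0)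
    (hQ : ⟪fderiv ℝ u (CL ζ) (e2 0), fderiv ℝ u (CL ζ) (e2 1)⟫ = 0) :
    (ζ ^ 2 * phiH u ζ).im = 0 := by
  unfold phiH
  rw [hQ]
  simp [Complex.mul_im, pow_two, hζ]

lemma phiH_continuousAt {n : ℕ} {u : E2 → Ey n} {V : Set E2} (hV : IsOpen V)
    (hC : ContDiffOn ℝ (⊤ : ℕ∞) u V) {z : ℂ} (hz : CL z ∈ V) :
    ContinuousAt (phiH u) z := by
  have hU : ContinuousAt (fun w : ℂ => fderiv ℝ u (CL w)) z := by
    have h1 : ContinuousAt (fderiv ℝ u) (CL z) :=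
      ((((hC _ hz).contDiffAt (hV.mem_nhds hz)).fderiv_right (m := ((⊤:ℕ∞) : WithTop ℕ∞))
        (le_of_eq (by exact_mod_cast rfl)))).continuousAt
    exact h1.comp CL.continuous.continuousAt
  have ha : ContinuousAt (fun w : ℂ => fderiv ℝ u (CL w) (e2 0)) z :=
    ((ContinuousLinearMap.apply ℝ (Ey n) (e2 0)).continuous.continuousAt).comp hU
  have hb : ContinuousAt (fun w : ℂ => fderiv ℝ u (CL w) (e2 1)) z :=
    ((ContinuousLinearMap.apply ℝ (Ey n) (e2 1)).continuous.continuousAt).comp hU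
  unfold phiH
  exact ((Complex.continuous_ofReal.continuousAt).comp
      ((ha.inner ha).sub (hb.inner hb))).sub
    ((ContinuousAt.smul (f := fun w : ℂ => (2 * ⟪fderiv ℝ u (CL w) (e2 0), fderiv ℝ u (CL w) (e2 1)⟫ : ℝ)) (continuousAt_const.mul (ha.inner hb))
      (continuousAt_const : ContinuousAt (fun _ : ℂ => Complex.I) z)))

/-- The function integrated over the boundary of the log-polar rectangle. -/
def gmap {n : ℕ} (u : E2 → Ey n) (w : ℂ) : ℂ :=
  Complex.exp w ^ 2 * phiH u (Complex.exp w)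

lemma gmap_continuousAt {n : ℕ} {u : E2 → Ey n} {V : Set E2} (hV : IsOpen V)
    (hC : ContDiffOn ℝ (⊤ : ℕ∞) u V) {w : ℂ} (hw : CL (Complex.exp w) ∈ V) :
    ContinuousAt (gmap u) w :=
  ((Complex.continuous_exp.pow 2).continuousAt.mul
    ((phiH_continuousAt hV hC hw).comp Complex.continuous_exp.continuousAt))

lemma gmap_differentiableAt {n : ℕ} {u : E2 → Ey n} {V : Set E2} (hV : IsOpen V)
    (hC : ContDiffOn ℝ (⊤ : ℕ∞) u V) {w : ℂ} (hw : CL (Complex.exp w) ∈ V)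
    (hlap : lapl u (CL (Complex.exp w)) = 0) :
    DifferentiableAt ℂ (gmap u) w := by
  have h := phi_diff hV hC hw hlap
  have he : DifferentiableAt ℂ Complex.exp w := Complex.differentiable_exp.differentiableAt
  exact (he.pow 2).mul (h.comp w he)

/-- **Pohozaev identity for harmonic maps with free boundary on the half-disc.**
For every `0 < r < 1`,
`∫₀^π |∂_θ[θ ↦ u(r cos θ, r sin θ)]|² dθ = r² ∫₀^π |∂_ρ u(r cos θ, r sin θ)|² dθ`. -/
theorem pohozaev_identity_free_boundary (n : ℕ) (hn : 2 ≤ n) (u : E2 → Ey n)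
    (hu : IsFBHarmonic n u) :
    ∀ r : ℝ, 0 < r → r < 1 →
      (∫ θ in (0:ℝ)..Real.pi,
          ‖deriv (fun φ : ℝ => u (pt (r * Real.cos φ) (r * Real.sin φ))) θ‖ ^ 2)
        = r ^ 2 * ∫ θ in (0:ℝ)..Real.pi,
            ‖radialDeriv u (pt (r * Real.cos θ) (r * Real.sin θ))‖ ^ 2 := by
  intro r hr0 hr1
  obtain ⟨V, hV, hsub, hC⟩ := hu.smooth
  have hIV : Iseg ⊆ V := by
    intro x hx
    refine hsub ⟨?_, le_of_eq hx.2.symm⟩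
    have h1 := hx.1
    rw [hx.2]
    have h2 : x 0 ^ 2 < 1 := by
      rw [← _root_.sq_abs]
      exact pow_lt_one₀ (abs_nonneg _) h1 (by norm_num)
    nlinarith
  have hHV : halfDisc 1 ⊆ V := fun p hp => hsub ⟨hp.1.le, hp.2.le⟩
  set x₂ := Real.log r with hx2def
  have hex2 : Real.exp x₂ = r := Real.exp_log hr0
  -- membership of images of rectangles in the half-disc
  have hmemC : ∀ w : ℂ, w.re ≤ x₂ → 0 ≤ w.im → w.im ≤ Real.pi →
      CL (Complex.exp w) ∈ closedHalfDisc 1 := by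
    intro w h1 h2 h3
    rw [CL_apply]
    have hle : Real.exp w.re ≤ r := hex2 ▸ Real.exp_le_exp.mpr h1
    refine ⟨?_, ?_⟩
    · show (Complex.exp w).re ^ 2 + (Complex.exp w).im ^ 2 ≤ 1 ^ 2
      have hsq : (Complex.exp w).re ^ 2 + (Complex.exp w).im ^ 2 = (Real.exp w.re) ^ 2 := by
        have h4 : Complex.normSq (Complex.exp w) = ‖Complex.exp w‖^2 :=
          (Complex.sq_norm _).symm
        rw [Complex.normSq_apply] at h4
        rw [Complex.norm_exp] at h4
        nlinarith [h4]
      rw [hsq]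
      nlinarith [Real.exp_pos w.re]
    · show 0 ≤ (Complex.exp w).im
      rw [Complex.exp_im]
      exact mul_nonneg (Real.exp_pos w.re).le (Real.sin_nonneg_of_nonneg_of_le_pi h2 h3)
  have hmemO : ∀ w : ℂ, w.re < x₂ → 0 < w.im → w.im < Real.pi →
      CL (Complex.exp w) ∈ halfDisc 1 := by
    intro w h1 h2 h3
    rw [CL_apply]
    have hlt : Real.exp w.re < r := hex2 ▸ Real.exp_lt_exp.mpr h1
    refine ⟨?_, ?_⟩
    · show (Complex.exp w).re ^ 2 + (Complex.exp w).im ^ 2 < 1 ^ 2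
      have hsq : (Complex.exp w).re ^ 2 + (Complex.exp w).im ^ 2 = (Real.exp w.re) ^ 2 := by
        have h4 : Complex.normSq (Complex.exp w) = ‖Complex.exp w‖^2 :=
          (Complex.sq_norm _).symm
        rw [Complex.normSq_apply] at h4
        rw [Complex.norm_exp] at h4
        nlinarith [h4]
      rw [hsq]
      nlinarith [Real.exp_pos w.re]
    · show 0 < (Complex.exp w).im
      rw [Complex.exp_im]
      exact mul_pos (Real.exp_pos w.re) (Real.sin_pos_of_pos_of_lt_pi h2 h3)
  -- orthogonality on the real axis
  have hQreal : ∀ s : ℝ, |s| < 1 →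
      ⟪fderiv ℝ u (pt s 0) (e2 0), fderiv ℝ u (pt s 0) (e2 1)⟫ = 0 := by
    intro s hs
    exact inner_ab_zero hV hIV hC hu.norm_eq hu.free ⟨(by simpa [pt] using hs), rfl⟩
  -- the horizontal edges give real values
  have hbot_im : ∀ x : ℝ, x ≤ x₂ → (gmap u ↑x).im = 0 := by
    intro x hx
    have hcl : CL (Complex.exp ↑x) = pt (Real.exp x) 0 := by
      rw [CL_apply, Complex.exp_ofReal_re, Complex.exp_ofReal_im]
    have hlt : Real.exp x < 1 := lt_of_le_of_lt (hex2 ▸ Real.exp_le_exp.mpr hx) hr1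
    refine im_sq_mul_phiH ?_ ?_
    · rw [← Complex.ofReal_exp]; exact Complex.ofReal_im _
    · rw [hcl]
      exact hQreal _ (by rwa [abs_of_pos (Real.exp_pos x)])
  have htop_im : ∀ x : ℝ, x ≤ x₂ → (gmap u (↑x + ↑Real.pi * Complex.I)).im = 0 := by
    intro x hx
    have hz : Complex.exp (↑x + ↑Real.pi * Complex.I) = ↑(-Real.exp x) := by
      rw [exp_re_im]
      simp [Real.cos_pi, Real.sin_pi]
    have hcl : CL (Complex.exp (↑x + ↑Real.pi * Complex.I)) = pt (-Real.exp x) 0 := by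
      rw [hz, CL_apply, Complex.ofReal_re, Complex.ofReal_im]
    have hlt : Real.exp x < 1 := lt_of_le_of_lt (hex2 ▸ Real.exp_le_exp.mpr hx) hr1
    refine im_sq_mul_phiH ?_ ?_
    · rw [hz]; exact Complex.ofReal_im _
    · rw [hcl]
      refine hQreal _ ?_
      rw [abs_neg, abs_of_pos (Real.exp_pos x)]
      exact hlt
  -- the key rectangle identity
  have key : ∀ x₁ : ℝ, x₁ < x₂ →
      (∫ y in (0:ℝ)..Real.pi, gmap u (↑x₂ + ↑y * Complex.I)).re
        = (∫ y in (0:ℝ)..Real.pi, gmap u (↑x₁ + ↑y * Complex.I)).re := by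
    intro x₁ hx₁
    have h0 := Complex.integral_boundary_rect_eq_zero_of_differentiable_on_off_countable
      (gmap u) (↑x₁) (↑x₂ + ↑Real.pi * Complex.I) ∅ countable_empty ?_ ?_
    rotate_left
    · -- continuity on the closed rectangle
      intro w hw
      rw [Complex.mem_reProdIm] at hw
      simp only [Complex.add_re, Complex.ofReal_re, Complex.mul_re, Complex.I_re,
        Complex.ofReal_im, Complex.I_im, Complex.add_im, Complex.mul_im, mul_zero, zero_mul,
        mul_one, sub_zero, add_zero, zero_add] at hw
      rw [Set.uIcc_of_le hx₁.le, Set.uIcc_of_le Real.pi_pos.le] at hw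
      exact (gmap_continuousAt hV hC
        (hsub (hmemC w hw.1.2 hw.2.1 hw.2.2))).continuousWithinAt
    · -- differentiability on the open rectangle
      intro w hw
      rw [Set.diff_empty, Complex.mem_reProdIm] at hw
      simp only [Complex.add_re, Complex.ofReal_re, Complex.mul_re, Complex.I_re,
        Complex.ofReal_im, Complex.I_im, Complex.add_im, Complex.mul_im, mul_zero, zero_mul,
        mul_one, sub_zero, add_zero, zero_add] at hw
      rw [min_eq_left hx₁.le, max_eq_right hx₁.le, min_eq_left Real.pi_pos.le,
        max_eq_right Real.pi_pos.le] at hw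
      have hmem := hmemO w hw.1.2 hw.2.1 hw.2.2
      exact gmap_differentiableAt hV hC (hHV hmem) (hu.harmonic _ hmem)
    -- exploit the identity
    simp only [Complex.add_re, Complex.ofReal_re, Complex.mul_re, Complex.I_re,
      Complex.ofReal_im, Complex.I_im, Complex.add_im, Complex.mul_im, mul_zero, zero_mul,
      mul_one, sub_zero, add_zero, zero_add, Complex.ofReal_zero] at h0
    -- h0 : boundary integral = 0; take imaginary parts
    have hbot : (∫ x in x₁..x₂, gmap u ↑x)
        = ((∫ x in x₁..x₂, (gmap u ↑x).re : ℝ) : ℂ) := by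
      rw [intervalIntegral.integral_congr
        (g := fun x : ℝ => (((gmap u ↑x).re : ℝ) : ℂ)) ?_]
      · exact RCLike.intervalIntegral_ofReal (𝕜 := ℂ) ..
      · intro x hx
        rw [Set.uIcc_of_le hx₁.le] at hx
        exact Complex.ext (by simp) (by simp [hbot_im x hx.2])
    have htop : (∫ x in x₁..x₂, gmap u (↑x + ↑Real.pi * Complex.I))
        = ((∫ x in x₁..x₂, (gmap u (↑x + ↑Real.pi * Complex.I)).re : ℝ) : ℂ) := by
      rw [intervalIntegral.integral_congr
        (g := fun x : ℝ => (((gmap u (↑x + ↑Real.pi * Complex.I)).re : ℝ) : ℂ)) ?_]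
      · exact RCLike.intervalIntegral_ofReal (𝕜 := ℂ) ..
      · intro x hx
        rw [Set.uIcc_of_le hx₁.le] at hx
        exact Complex.ext (by simp) (by simp [htop_im x hx.2])
    have him := congrArg Complex.im h0
    rw [hbot, htop] at him
    simp only [Complex.sub_im, Complex.add_im, Complex.ofReal_im, smul_eq_mul,
      Complex.mul_im, Complex.I_re, Complex.I_im, Complex.zero_im, one_mul, zero_mul] at him
    linarith
  -- uniform bound on the Hopf differential
  obtain ⟨M, hM⟩ : ∃ M : ℝ, ∀ ζ ∈ Metric.closedBall (0:ℂ) r ∩ {ζ : ℂ | 0 ≤ ζ.im},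
      ‖phiH u ζ‖ ≤ M := by
    refine IsCompact.exists_bound_of_continuousOn
      ((isCompact_closedBall 0 r).inter_right
        (isClosed_le continuous_const Complex.continuous_im)) ?_
    intro ζ hζ
    have hballs : ‖ζ‖ ≤ r := by
      have := hζ.1
      rwa [Metric.mem_closedBall, Complex.dist_eq, sub_zero] at this
    have hmem : CL ζ ∈ closedHalfDisc 1 := by
      rw [CL_apply]
      refine ⟨?_, hζ.2⟩
      show ζ.re ^ 2 + ζ.im ^ 2 ≤ 1 ^ 2
      have h4 : Complex.normSq ζ = ‖ζ‖^2 := (Complex.sq_norm _).symm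
      rw [Complex.normSq_apply] at h4
      nlinarith [norm_nonneg ζ]
    exact (phiH_continuousAt hV hC (hsub hmem)).continuousWithinAt
  -- bound on the vertical integral
  have hFbound : ∀ x₁ : ℝ, x₁ ≤ x₂ →
      ‖∫ y in (0:ℝ)..Real.pi, gmap u (↑x₁ + ↑y * Complex.I)‖
        ≤ Real.exp x₁ ^ 2 * M * Real.pi := by
    intro x₁ hx₁
    have h := intervalIntegral.norm_integral_le_of_norm_le_const
      (C := Real.exp x₁ ^ 2 * M) (f := fun y => gmap u (↑x₁ + ↑y * Complex.I))
      (a := (0:ℝ)) (b := Real.pi) ?_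
    · calc ‖∫ y in (0:ℝ)..Real.pi, gmap u (↑x₁ + ↑y * Complex.I)‖
          ≤ Real.exp x₁ ^ 2 * M * |Real.pi - 0| := h
        _ = Real.exp x₁ ^ 2 * M * Real.pi := by
            rw [sub_zero, abs_of_pos Real.pi_pos]
    · intro y hy
      rw [Set.uIoc_of_le Real.pi_pos.le] at hy
      set w : ℂ := ↑x₁ + ↑y * Complex.I with hwdef
      have hwre : w.re = x₁ := by simp [hwdef]
      have hwim : w.im = y := by simp [hwdef]
      have hζmem : Complex.exp w ∈ Metric.closedBall (0:ℂ) r ∩ {ζ : ℂ | 0 ≤ ζ.im} := by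
        constructor
        · rw [Metric.mem_closedBall, Complex.dist_eq, sub_zero, Complex.norm_exp, hwre]
          exact hex2 ▸ Real.exp_le_exp.mpr hx₁
        · show 0 ≤ (Complex.exp w).im
          rw [Complex.exp_im, hwim]
          exact mul_nonneg (Real.exp_pos _).le
            (Real.sin_nonneg_of_nonneg_of_le_pi hy.1.le hy.2)
      have : ‖gmap u w‖ = ‖Complex.exp w‖ ^ 2 * ‖phiH u (Complex.exp w)‖ := by
        rw [gmap, norm_mul, norm_pow]
      rw [this, Complex.norm_exp, hwre]
      exact mul_le_mul_of_nonneg_left (hM _ hζmem) (sq_nonneg _)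
  -- the limit as `x₁ → -∞`
  have hre0 : (∫ y in (0:ℝ)..Real.pi, gmap u (↑x₂ + ↑y * Complex.I)).re = 0 := by
    have hlim : Tendsto (fun x₁ : ℝ => Real.exp x₁ ^ 2 * M * Real.pi) atBot (𝓝 0) := by
      have h1 := ((Real.tendsto_exp_atBot.pow 2).mul_const M).mul_const Real.pi
      simpa using h1
    have habs : |(∫ y in (0:ℝ)..Real.pi, gmap u (↑x₂ + ↑y * Complex.I)).re| ≤ 0 := by
      refine ge_of_tendsto hlim ?_
      rw [eventually_atBot]
      refine ⟨x₂, fun x₁ hx₁ => ?_⟩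
      have hb : |(∫ y in (0:ℝ)..Real.pi, gmap u (↑x₁ + ↑y * Complex.I)).re|
          ≤ Real.exp x₁ ^ 2 * M * Real.pi := by
        calc |(∫ y in (0:ℝ)..Real.pi, gmap u (↑x₁ + ↑y * Complex.I)).re|
            ≤ ‖∫ y in (0:ℝ)..Real.pi, gmap u (↑x₁ + ↑y * Complex.I)‖ :=
              Complex.abs_re_le_norm _
          _ = ‖∫ y in (0:ℝ)..Real.pi, gmap u (↑x₁ + ↑y * Complex.I)‖ :=
              rfl
          _ ≤ Real.exp x₁ ^ 2 * M * Real.pi := hFbound x₁ hx₁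
      rcases eq_or_lt_of_le hx₁ with heq | hlt
      · rw [heq] at hb ⊢; exact hb
      · rw [key x₁ hlt]; exact hb
    exact abs_eq_zero.mp (le_antisymm habs (abs_nonneg _))
  -- continuity of the integrands along the circle of radius `r`
  have hpγ_mem : ∀ θ ∈ uIcc (0:ℝ) Real.pi,
      pt (r * Real.cos θ) (r * Real.sin θ) ∈ closedHalfDisc 1 := by
    intro θ hθ
    rw [Set.uIcc_of_le Real.pi_pos.le] at hθ
    refine ⟨?_, ?_⟩
    · show (r * Real.cos θ) ^ 2 + (r * Real.sin θ) ^ 2 ≤ 1 ^ 2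
      have h2 : r ^ 2 ≤ 1 := pow_le_one₀ hr0.le hr1.le
      nlinarith [Real.sin_sq_add_cos_sq θ]
    · show 0 ≤ r * Real.sin θ
      exact mul_nonneg hr0.le (Real.sin_nonneg_of_nonneg_of_le_pi hθ.1 hθ.2)
  have hVmem : ∀ θ ∈ uIcc (0:ℝ) Real.pi, pt (r * Real.cos θ) (r * Real.sin θ) ∈ V :=
    fun θ hθ => hsub (hpγ_mem θ hθ)
  have hud : ∀ θ ∈ uIcc (0:ℝ) Real.pi,
      DifferentiableAt ℝ u (pt (r * Real.cos θ) (r * Real.sin θ)) := fun θ hθ =>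
    ((hC _ (hVmem θ hθ)).contDiffAt (hV.mem_nhds (hVmem θ hθ))).differentiableAt
      (by simp)
  have hγdiff : ∀ θ : ℝ, HasDerivAt (fun φ : ℝ => pt (r * Real.cos φ) (r * Real.sin φ))
      ((r * -Real.sin θ) • e2 0 + (r * Real.cos θ) • e2 1) θ := by
    intro θ
    simp only [pt_eq]
    exact (((Real.hasDerivAt_cos θ).const_mul r).smul_const (e2 0)).add
      (((Real.hasDerivAt_sin θ).const_mul r).smul_const (e2 1))
  have hderiv : ∀ θ ∈ uIcc (0:ℝ) Real.pi,
      deriv (fun φ : ℝ => u (pt (r * Real.cos φ) (r * Real.sin φ))) θ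
        = fderiv ℝ u (pt (r * Real.cos θ) (r * Real.sin θ))
            ((r * -Real.sin θ) • e2 0 + (r * Real.cos θ) • e2 1) := fun θ hθ =>
    (((hud θ hθ).hasFDerivAt).comp_hasDerivAt θ (hγdiff θ)).deriv
  have hnormγ : ∀ θ : ℝ, ‖pt (r * Real.cos θ) (r * Real.sin θ)‖ = r := by
    intro θ
    rw [EuclideanSpace.norm_eq]
    have h1 : ∑ i : Fin 2, ‖pt (r * Real.cos θ) (r * Real.sin θ) i‖ ^ 2 = r ^ 2 := by
      rw [Fin.sum_univ_two]
      show ‖r * Real.cos θ‖ ^ 2 + ‖r * Real.sin θ‖ ^ 2 = r ^ 2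
      rw [Real.norm_eq_abs, Real.norm_eq_abs, _root_.sq_abs, _root_.sq_abs]
      nlinarith [Real.sin_sq_add_cos_sq θ]
    rw [h1, Real.sqrt_sq hr0.le]
  have hradial : ∀ θ : ℝ, radialDeriv u (pt (r * Real.cos θ) (r * Real.sin θ))
      = fderiv ℝ u (pt (r * Real.cos θ) (r * Real.sin θ))
          (Real.cos θ • e2 0 + Real.sin θ • e2 1) := by
    intro θ
    unfold radialDeriv
    rw [hnormγ θ]
    congr 1
    rw [pt_eq, smul_add, smul_smul, smul_smul]
    rw [inv_mul_cancel_left₀ hr0.ne', inv_mul_cancel_left₀ hr0.ne']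
  -- continuity of the explicit integrands
  have hpγcont : Continuous (fun θ : ℝ => pt (r * Real.cos θ) (r * Real.sin θ)) := by
    simp only [pt_eq]
    exact ((continuous_const.mul Real.continuous_cos).smul continuous_const).add
      ((continuous_const.mul Real.continuous_sin).smul continuous_const)
  have hUcont : ContinuousOn (fun θ : ℝ => fderiv ℝ u (pt (r * Real.cos θ) (r * Real.sin θ)))
      (uIcc (0:ℝ) Real.pi) := by
    intro θ hθ
    have h1 : ContinuousAt (fderiv ℝ u) (pt (r * Real.cos θ) (r * Real.sin θ)) :=
      ((((hC _ (hVmem θ hθ)).contDiffAt (hV.mem_nhds (hVmem θ hθ))).fderiv_right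
        (m := ((⊤:ℕ∞) : WithTop ℕ∞)) (le_of_eq (by exact_mod_cast rfl)))).continuousAt
    exact ContinuousAt.comp_continuousWithinAt (g := fderiv ℝ u) h1 hpγcont.continuousWithinAt
  have hAcont : ContinuousOn (fun θ : ℝ =>
      ‖fderiv ℝ u (pt (r * Real.cos θ) (r * Real.sin θ))
        (Real.cos θ • e2 0 + Real.sin θ • e2 1)‖ ^ 2) (uIcc (0:ℝ) Real.pi) := by
    refine ((hUcont.clm_apply ?_).norm.pow 2)
    exact ((Real.continuous_cos.smul continuous_const).add
      (Real.continuous_sin.smul continuous_const)).continuousOn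
  have hBcont : ContinuousOn (fun θ : ℝ =>
      ‖fderiv ℝ u (pt (r * Real.cos θ) (r * Real.sin θ))
        ((r * -Real.sin θ) • e2 0 + (r * Real.cos θ) • e2 1)‖ ^ 2) (uIcc (0:ℝ) Real.pi) := by
    refine ((hUcont.clm_apply ?_).norm.pow 2)
    exact (((continuous_const.mul Real.continuous_sin.neg).smul continuous_const).add
      ((continuous_const.mul Real.continuous_cos).smul continuous_const)).continuousOn
  have hAint : IntervalIntegrable (fun θ : ℝ =>
      ‖fderiv ℝ u (pt (r * Real.cos θ) (r * Real.sin θ))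
        (Real.cos θ • e2 0 + Real.sin θ • e2 1)‖ ^ 2) volume 0 Real.pi :=
    hAcont.intervalIntegrable
  have hBint : IntervalIntegrable (fun θ : ℝ =>
      ‖fderiv ℝ u (pt (r * Real.cos θ) (r * Real.sin θ))
        ((r * -Real.sin θ) • e2 0 + (r * Real.cos θ) • e2 1)‖ ^ 2) volume 0 Real.pi :=
    hBcont.intervalIntegrable
  -- rewrite the goal using the explicit integrands
  have hBeq : EqOn
      (fun θ : ℝ => ‖deriv (fun φ : ℝ => u (pt (r * Real.cos φ) (r * Real.sin φ))) θ‖ ^ 2)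
      (fun θ : ℝ => ‖fderiv ℝ u (pt (r * Real.cos θ) (r * Real.sin θ))
        ((r * -Real.sin θ) • e2 0 + (r * Real.cos θ) • e2 1)‖ ^ 2)
      (uIcc (0:ℝ) Real.pi) := fun θ hθ => by simp only; rw [hderiv θ hθ]
  have hAeq : EqOn
      (fun θ : ℝ => ‖radialDeriv u (pt (r * Real.cos θ) (r * Real.sin θ))‖ ^ 2)
      (fun θ : ℝ => ‖fderiv ℝ u (pt (r * Real.cos θ) (r * Real.sin θ))
        (Real.cos θ • e2 0 + Real.sin θ • e2 1)‖ ^ 2)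
      (uIcc (0:ℝ) Real.pi) := fun θ _ => by simp only; rw [hradial θ]
  rw [intervalIntegral.integral_congr hBeq, intervalIntegral.integral_congr hAeq]
  -- relate the real part of the vertical integral to the explicit integrands
  have hgcont : ContinuousOn (fun y : ℝ => gmap u (↑x₂ + ↑y * Complex.I))
      (uIcc (0:ℝ) Real.pi) := by
    intro y hy
    rw [Set.uIcc_of_le Real.pi_pos.le] at hy
    have hmem : CL (Complex.exp (↑x₂ + ↑y * Complex.I)) ∈ closedHalfDisc 1 := by
      refine hmemC _ (by simp) (by simpa using hy.1) (by simpa using hy.2)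
    have hcurve : Continuous (fun y : ℝ => (↑x₂ + ↑y * Complex.I : ℂ)) :=
      continuous_const.add (Complex.continuous_ofReal.mul continuous_const)
    exact ContinuousAt.comp_continuousWithinAt (g := gmap u)
      (gmap_continuousAt hV hC (hsub hmem)) hcurve.continuousWithinAt
  have hreint : (∫ y in (0:ℝ)..Real.pi, gmap u (↑x₂ + ↑y * Complex.I)).re
      = ∫ y in (0:ℝ)..Real.pi, (gmap u (↑x₂ + ↑y * Complex.I)).re := by
    have hint : IntervalIntegrable (fun y : ℝ => gmap u (↑x₂ + ↑y * Complex.I))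
        volume 0 Real.pi := hgcont.intervalIntegrable
    have h := Complex.reCLM.intervalIntegral_comp_comm hint
    simpa using h.symm
  -- pointwise identity of the integrands
  have hpoint : ∀ θ ∈ uIcc (0:ℝ) Real.pi, (gmap u (↑x₂ + ↑θ * Complex.I)).re
      = r ^ 2 * ‖fderiv ℝ u (pt (r * Real.cos θ) (r * Real.sin θ))
            (Real.cos θ • e2 0 + Real.sin θ • e2 1)‖ ^ 2
        - ‖fderiv ℝ u (pt (r * Real.cos θ) (r * Real.sin θ))
            ((r * -Real.sin θ) • e2 0 + (r * Real.cos θ) • e2 1)‖ ^ 2 := by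
    intro θ _
    have hz : Complex.exp (↑x₂ + ↑θ * Complex.I)
        = ↑(r * Real.cos θ) + ↑(r * Real.sin θ) * Complex.I := by
      rw [exp_re_im, hex2]
    have hcl : CL (Complex.exp (↑x₂ + ↑θ * Complex.I)) = pt (r * Real.cos θ) (r * Real.sin θ) := by
      have h1 : (↑(r * Real.cos θ) + ↑(r * Real.sin θ) * Complex.I).re = r * Real.cos θ := by
        simp only [Complex.add_re, Complex.ofReal_re, Complex.mul_re, Complex.ofReal_im,
          Complex.I_re, Complex.I_im, mul_zero, zero_mul, mul_one, sub_zero, add_zero]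
      have h2 : (↑(r * Real.cos θ) + ↑(r * Real.sin θ) * Complex.I).im = r * Real.sin θ := by
        simp only [Complex.add_im, Complex.ofReal_im, Complex.mul_im, Complex.ofReal_re,
          Complex.I_im, Complex.I_re, mul_zero, zero_mul, mul_one, add_zero, zero_add]
      rw [hz, CL_apply, h1, h2]
    rw [gmap, phiH, hcl, hz]
    set a : Ey n := fderiv ℝ u (pt (r * Real.cos θ) (r * Real.sin θ)) (e2 0) with ha
    set b : Ey n := fderiv ℝ u (pt (r * Real.cos θ) (r * Real.sin θ)) (e2 1) with hb
    simp only [map_add, ContinuousLinearMap.map_smul]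
    rw [← real_inner_self_eq_norm_sq, ← real_inner_self_eq_norm_sq]
    simp only [inner_add_left, inner_add_right, real_inner_smul_left, real_inner_smul_right]
    rw [real_inner_comm b a]
    simp only [Complex.mul_re, Complex.mul_im, Complex.add_re, Complex.add_im,
      Complex.ofReal_re, Complex.ofReal_im, Complex.I_re, Complex.I_im, Complex.sub_re,
      Complex.sub_im, pow_two, Complex.real_smul, Complex.ofReal_mul]
    ring
  -- put everything together
  have h5 : (∫ y in (0:ℝ)..Real.pi, (gmap u (↑x₂ + ↑y * Complex.I)).re)
      = r ^ 2 * (∫ θ in (0:ℝ)..Real.pi,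
            ‖fderiv ℝ u (pt (r * Real.cos θ) (r * Real.sin θ))
              (Real.cos θ • e2 0 + Real.sin θ • e2 1)‖ ^ 2)
        - ∫ θ in (0:ℝ)..Real.pi,
            ‖fderiv ℝ u (pt (r * Real.cos θ) (r * Real.sin θ))
              ((r * -Real.sin θ) • e2 0 + (r * Real.cos θ) • e2 1)‖ ^ 2 := by
    rw [intervalIntegral.integral_congr hpoint]
    rw [intervalIntegral.integral_sub (hAint.const_mul (r ^ 2)) hBint]
    rw [intervalIntegral.integral_const_mul]
  rw [hreint] at hre0
  linarith [hre0, h5]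
end
end

section
/- Inverted harmonic maps satisfy a sphere-type equation: Let n ≥ 2, let U ⊆ ℝ² be open, and let u : U → ℝ^{n+1} be smooth, nowhere vanishing, with Δu = 0 on U. Set v = u/|u|² (the composition of u with the inversion σ(z) = z/|z|²). Then on U one has the pointwise identity div(∇v/|v|⁴) = −2 (|∇v|²/|v|⁶) v, where the divergence is taken componentwise and |∇v|² = Σ_j |∇v_j|². -/
open MeasureTheory Filter Topology Set
open scoped RealInnerProductSpace

noncomputable section

/-- The divergence of a plane vector field. -/
def divE (F : E2 → E2) (x : E2) : ℝ :=
  ∑ i : Fin 2, fderiv ℝ F x (e2 i) i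

/-- The composition `σ ∘ u` of `u` with the inversion `σ(z) = z/|z|²` with respect to the
unit sphere. -/
def invmap {n : ℕ} (u : E2 → Ey n) : E2 → Ey n :=
  fun x => (‖u x‖ ^ 2)⁻¹ • u x

/-- The vector field `X_{i,j} = 2 (v_j ∇v_i − v_i ∇v_j)/|v|⁴`. -/
def Xfield {n : ℕ} (v : E2 → Ey n) (i j : Fin (n + 1)) (x : E2) : E2 :=
  (2 / ‖v x‖ ^ 4) •
    (v x j • gradient (fun y => v y i) x - v x i • gradient (fun y => v y j) x)

/-- Coordinates of the `fderiv` of a map into a Euclidean space. -/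
lemma coord_fderiv {m : ℕ} (f : E2 → EuclideanSpace ℝ (Fin m)) (y : E2)
    (hf : DifferentiableAt ℝ f y) (k : Fin m) (w : E2) :
    fderiv ℝ (fun z => f z k) y w = fderiv ℝ f y w k := by
  have h : fderiv ℝ (fun z => (EuclideanSpace.proj (𝕜 := ℝ) k) (f z)) y
      = (EuclideanSpace.proj (𝕜 := ℝ) k).comp (fderiv ℝ f y) :=
    ((EuclideanSpace.proj (𝕜 := ℝ) k).hasFDerivAt.comp y hf.hasFDerivAt).fderiv
  have h2 : (fun z => f z k) = fun z => (EuclideanSpace.proj (𝕜 := ℝ) k) (f z) := rfl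
  rw [h2, h]; rfl

/-- Coordinates of the gradient. -/
lemma grad_coord (f : E2 → ℝ) (y : E2) (i : Fin 2) :
    gradient f y i = fderiv ℝ f y (e2 i) := by
  have h1 : ⟪gradient f y, e2 i⟫ = fderiv ℝ f y (e2 i) :=
    InnerProductSpace.toDual_symm_apply
  rw [← h1, real_inner_comm]
  rw [e2, EuclideanSpace.inner_single_left]; simp

/-- Squared norm as sum of squares of coordinates. -/
lemma normsq {m : ℕ} (a : EuclideanSpace ℝ (Fin m)) : ‖a‖ ^ 2 = ∑ k, a k * a k := by
  rw [EuclideanSpace.norm_eq, Real.sq_sqrt (by positivity)]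
  exact Finset.sum_congr rfl fun k _ => by rw [Real.norm_eq_abs, sq_abs, sq]

/-- **Inverted harmonic maps satisfy a sphere-type equation.** If `u` is smooth, nowhere
vanishing and harmonic on an open set `U ⊆ ℝ²`, then `v = u/|u|²` satisfies
`div(∇v/|v|⁴) = −2 (|∇v|²/|v|⁶) v` componentwise on `U`. -/
theorem inverted_harmonic_sphere_type_equation (n : ℕ) (hn : 2 ≤ n)
    (U : Set E2) (hU : IsOpen U) (u : E2 → Ey n)
    (hsm : ContDiffOn ℝ (⊤ : ℕ∞) u U) (hnv : ∀ x ∈ U, u x ≠ 0)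
    (hharm : ∀ x ∈ U, lapl u x = 0) :
    ∀ x ∈ U, ∀ j : Fin (n + 1),
      divE (fun y => (‖invmap u y‖ ^ 4)⁻¹ • gradient (fun z => invmap u z j) y) x
        = -2 * (gradSq (invmap u) x / ‖invmap u x‖ ^ 6) * invmap u x j := by
  intro x hx j
  have hUx : U ∈ 𝓝 x := hU.mem_nhds hx
  have h1 : (1 : WithTop ℕ∞) ≤ ((⊤ : ℕ∞) : WithTop ℕ∞) := by exact_mod_cast le_top
  have h2 : ((1 : WithTop ℕ∞) + 1) ≤ ((⊤ : ℕ∞) : WithTop ℕ∞) := by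
    have : ((1 : WithTop ℕ∞) + 1) = (((1 : ℕ∞) + 1 : ℕ∞) : WithTop ℕ∞) := by norm_cast
    rw [this]
    exact WithTop.coe_le_coe.mpr le_top
  have hCu : ∀ y ∈ U, ContDiffAt ℝ (⊤ : ℕ∞) u y := fun y hy => hsm.contDiffAt (hU.mem_nhds hy)
  have hCuk : ∀ (k : Fin (n+1)), ∀ y ∈ U, ContDiffAt ℝ (⊤ : ℕ∞) (fun z => u z k) y :=
    fun k y hy => (EuclideanSpace.proj (𝕜 := ℝ) k).contDiff.contDiffAt.comp y (hCu y hy)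
  obtain ⟨q, hqdef⟩ : ∃ q : E2 → ℝ, q = fun y => ∑ k, u y k * u y k := ⟨_, rfl⟩
  have hq_app : ∀ y, q y = ∑ k, u y k * u y k := fun y => by rw [hqdef]
  have hqnorm : ∀ y, ‖u y‖ ^ 2 = q y := fun y => by rw [hq_app]; exact normsq (u y)
  have hq0 : ∀ y ∈ U, q y ≠ 0 := fun y hy => by
    rw [← hqnorm]; exact pow_ne_zero 2 (norm_ne_zero_iff.2 (hnv y hy))
  have hCq : ∀ y ∈ U, ContDiffAt ℝ (⊤ : ℕ∞) q y := fun y hy => by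
    rw [hqdef]; exact ContDiffAt.sum fun k _ => (hCuk k y hy).mul (hCuk k y hy)
  have hduk : ∀ (k : Fin (n+1)) (y : E2), y ∈ U → DifferentiableAt ℝ (fun z => u z k) y :=
    fun k y hy => (hCuk k y hy).differentiableAt (by simp)
  have hdu : ∀ y ∈ U, DifferentiableAt ℝ u y := fun y hy => (hCu y hy).differentiableAt (by simp)
  have hdq : ∀ y ∈ U, DifferentiableAt ℝ q y := fun y hy => (hCq y hy).differentiableAt (by simp)
  -- first derivative of q
  have hdq_val : ∀ y ∈ U, ∀ i : Fin 2, fderiv ℝ q y (e2 i)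
      = ∑ k, 2 * u y k * fderiv ℝ (fun z => u z k) y (e2 i) := by
    intro y hy i
    rw [hqdef, fderiv_fun_sum (A := fun k z => u z k * u z k) (fun k _ => (hduk k y hy).mul (hduk k y hy)),
      ContinuousLinearMap.sum_apply]
    refine Finset.sum_congr rfl fun k _ => ?_
    rw [fderiv_fun_mul (hduk k y hy) (hduk k y hy)]
    simp only [ContinuousLinearMap.add_apply, ContinuousLinearMap.smul_apply, smul_eq_mul]
    ring
  -- first derivative of the inverted components
  have hqv : ∀ (k : Fin (n+1)), ∀ y ∈ U, ∀ i : Fin 2,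
      q y ^ 2 * fderiv ℝ (fun z => (q z)⁻¹ * u z k) y (e2 i)
        = q y * fderiv ℝ (fun z => u z k) y (e2 i) - u y k * fderiv ℝ q y (e2 i) := by
    intro k y hy i
    have hdvk : DifferentiableAt ℝ (fun z => (q z)⁻¹ * u z k) y :=
      ((hdq y hy).inv (hq0 y hy)).mul (hduk k y hy)
    have heq : (fun z => q z * ((q z)⁻¹ * u z k)) =ᶠ[𝓝 y] (fun z => u z k) := by
      filter_upwards [hU.mem_nhds hy] with z hz
      field_simp [hq0 z hz]
    have h := Filter.EventuallyEq.fderiv_eq (𝕜 := ℝ) heq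
    rw [fderiv_fun_mul (hdq y hy) hdvk] at h
    have h' := congrArg (fun (L : E2 →L[ℝ] ℝ) => L (e2 i)) h
    simp only [ContinuousLinearMap.add_apply, ContinuousLinearMap.smul_apply, smul_eq_mul] at h'
    have hqy := hq0 y hy
    have hcc : (q y)⁻¹ * q y = 1 := inv_mul_cancel₀ hqy
    linear_combination q y * h' - (u y k * fderiv ℝ q y (e2 i)) * hcc
  -- second derivative facts
  have hdu' : ∀ (k : Fin (n+1)) (i : Fin 2),
      DifferentiableAt ℝ (fun y => fderiv ℝ (fun z => u z k) y (e2 i)) x := fun k i =>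
    (((hCuk k x hx).fderiv_right (m := 1) h2).differentiableAt one_ne_zero).clm_apply
      (differentiableAt_const _)
  have hdq' : ∀ i : Fin 2, DifferentiableAt ℝ (fun y => fderiv ℝ q y (e2 i)) x := fun i =>
    (((hCq x hx).fderiv_right (m := 1) h2).differentiableAt one_ne_zero).clm_apply
      (differentiableAt_const _)
  -- harmonicity componentwise
  have hA : ∀ k : Fin (n+1),
      ∑ i : Fin 2, fderiv ℝ (fun y => fderiv ℝ (fun z => u z k) y (e2 i)) x (e2 i) = 0 := by
    intro k
    have hfd : DifferentiableAt ℝ (fderiv ℝ u) x :=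
      ((hCu x hx).fderiv_right (m := 1) h2).differentiableAt one_ne_zero
    have key : ∀ i : Fin 2, fderiv ℝ (fun y => fderiv ℝ (fun z => u z k) y (e2 i)) x (e2 i)
        = fderiv ℝ (fun y => fderiv ℝ u y (e2 i)) x (e2 i) k := by
      intro i
      have hee : (fun y => fderiv ℝ (fun z => u z k) y (e2 i)) =ᶠ[𝓝 x]
          (fun y => fderiv ℝ u y (e2 i) k) := by
        filter_upwards [hUx] with z hz
        exact coord_fderiv u z (hdu z hz) k (e2 i)
      rw [hee.fderiv_eq]
      exact coord_fderiv (fun y => fderiv ℝ u y (e2 i)) x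
        (hfd.clm_apply (differentiableAt_const _)) k (e2 i)
    rw [Finset.sum_congr rfl fun i _ => key i]
    have hmap : (∑ i : Fin 2, fderiv ℝ (fun y => fderiv ℝ u y (e2 i)) x (e2 i)) k
        = ∑ i : Fin 2, fderiv ℝ (fun y => fderiv ℝ u y (e2 i)) x (e2 i) k :=
      map_sum (EuclideanSpace.proj (𝕜 := ℝ) k)
        (fun i => fderiv ℝ (fun y => fderiv ℝ u y (e2 i)) x (e2 i)) Finset.univ
    rw [← hmap]
    have : lapl u x = 0 := hharm x hx
    rw [lapl] at this
    rw [this]; rfl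
  -- Laplacian of q
  have hB : ∑ i : Fin 2, fderiv ℝ (fun y => fderiv ℝ q y (e2 i)) x (e2 i)
      = 2 * ∑ i : Fin 2, ∑ k, fderiv ℝ (fun z => u z k) x (e2 i)
          * fderiv ℝ (fun z => u z k) x (e2 i) := by
    have key : ∀ i : Fin 2, fderiv ℝ (fun y => fderiv ℝ q y (e2 i)) x (e2 i)
        = ∑ k, (2 * (fderiv ℝ (fun z => u z k) x (e2 i) * fderiv ℝ (fun z => u z k) x (e2 i))
            + 2 * u x k * fderiv ℝ (fun y => fderiv ℝ (fun z => u z k) y (e2 i)) x (e2 i)) := by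
      intro i
      have hee : (fun y => fderiv ℝ q y (e2 i)) =ᶠ[𝓝 x]
          (fun y => ∑ k, 2 * u y k * fderiv ℝ (fun z => u z k) y (e2 i)) := by
        filter_upwards [hUx] with z hz
        exact hdq_val z hz i
      rw [hee.fderiv_eq,
        fderiv_fun_sum (A := fun k y => 2 * u y k * fderiv ℝ (fun z => u z k) y (e2 i)) (fun k _ => (((differentiableAt_const (2:ℝ)).mul (hduk k x hx)).mul
          (hdu' k i))), ContinuousLinearMap.sum_apply]
      refine Finset.sum_congr rfl fun k _ => ?_
      rw [fderiv_fun_mul (c := fun y => 2 * u y k) ((differentiableAt_const (2:ℝ)).mul (hduk k x hx)) (hdu' k i),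
        fderiv_const_mul (hduk k x hx) (2:ℝ)]
      simp only [ContinuousLinearMap.add_apply, ContinuousLinearMap.smul_apply, smul_eq_mul]
      ring
    rw [Finset.sum_congr rfl fun i _ => key i]
    rw [Finset.sum_comm]
    have split : ∀ k : Fin (n+1), ∑ i : Fin 2,
        (2 * (fderiv ℝ (fun z => u z k) x (e2 i) * fderiv ℝ (fun z => u z k) x (e2 i))
          + 2 * u x k * fderiv ℝ (fun y => fderiv ℝ (fun z => u z k) y (e2 i)) x (e2 i))
        = (∑ i : Fin 2, 2 * (fderiv ℝ (fun z => u z k) x (e2 i)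
            * fderiv ℝ (fun z => u z k) x (e2 i)))
          + 2 * u x k * ∑ i : Fin 2,
              fderiv ℝ (fun y => fderiv ℝ (fun z => u z k) y (e2 i)) x (e2 i) := by
      intro k
      rw [Finset.sum_add_distrib, Finset.mul_sum]
    rw [Finset.sum_congr rfl fun k _ => split k]
    rw [Finset.sum_congr rfl fun k _ => by rw [hA k, mul_zero, add_zero]]
    rw [Finset.sum_comm, Finset.mul_sum]
    exact Finset.sum_congr rfl fun i _ => by rw [Finset.mul_sum]
  -- coordinates of the inverted map
  have hinv_app : ∀ (y : E2) (k : Fin (n+1)), invmap u y k = (q y)⁻¹ * u y k := by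
    intro y k
    rw [invmap]
    simp only [PiLp.smul_apply, smul_eq_mul, hqnorm y]
  have hinv_fun : ∀ k : Fin (n+1), (fun z => invmap u z k) = fun z => (q z)⁻¹ * u z k :=
    fun k => funext fun z => hinv_app z k
  have hq_nonneg : ∀ y, 0 ≤ q y := fun y => by rw [← hqnorm]; positivity
  have hnormv : ∀ y, ‖invmap u y‖ = (q y)⁻¹ * ‖u y‖ := by
    intro y
    rw [invmap, norm_smul, hqnorm y, Real.norm_eq_abs, abs_of_nonneg (inv_nonneg.2 (hq_nonneg y))]
  have hnorm4 : ∀ y, (‖invmap u y‖ ^ 4)⁻¹ = q y ^ 2 := by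
    intro y
    rcases eq_or_ne (q y) 0 with h0 | h0
    · have hu0 : ‖u y‖ = 0 := by
        have h := hqnorm y; rw [h0] at h
        exact pow_eq_zero_iff two_ne_zero |>.mp h
      rw [hnormv y, hu0, h0]
      simp
    · have h4 : ‖u y‖ ^ 4 = q y ^ 2 := by rw [← hqnorm y]; ring
      rw [hnormv y, mul_pow, h4]
      field_simp
  have hqx0 : q x ≠ 0 := hq0 x hx
  -- rewrite the vector field
  have hFrw : (fun y => (‖invmap u y‖ ^ 4)⁻¹ • gradient (fun z => invmap u z j) y)
      = fun y => (q y ^ 2) • gradient (fun z => (q z)⁻¹ * u z j) y := by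
    funext y
    rw [hnorm4 y, hinv_fun j]
  -- differentiability of the rewritten field
  have hCvj : ContDiffAt ℝ (⊤ : ℕ∞) (fun z => (q z)⁻¹ * u z j) x :=
    ((hCq x hx).inv hqx0).mul (hCuk j x hx)
  have hdvj' : ∀ i : Fin 2,
      DifferentiableAt ℝ (fun y => fderiv ℝ (fun z => (q z)⁻¹ * u z j) y (e2 i)) x := fun i =>
    ((hCvj.fderiv_right (m := 1) h2).differentiableAt one_ne_zero).clm_apply (differentiableAt_const _)
  have hgradd : DifferentiableAt ℝ (fun y => gradient (fun z => (q z)⁻¹ * u z j) y) x := by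
    rw [differentiableAt_euclidean]
    intro i
    have hco : (fun y => gradient (fun z => (q z)⁻¹ * u z j) y i)
        = fun y => fderiv ℝ (fun z => (q z)⁻¹ * u z j) y (e2 i) :=
      funext fun y => grad_coord _ y i
    rw [hco]
    exact hdvj' i
  have hFd : DifferentiableAt ℝ
      (fun y => (q y ^ 2) • gradient (fun z => (q z)⁻¹ * u z j) y) x :=
    ((hdq x hx).pow 2).smul hgradd
  -- compute each summand of the divergence
  have key : ∀ i : Fin 2,
      fderiv ℝ (fun y => (q y ^ 2) • gradient (fun z => (q z)⁻¹ * u z j) y) x (e2 i) i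
        = q x * fderiv ℝ (fun y => fderiv ℝ (fun z => u z j) y (e2 i)) x (e2 i)
          - u x j * fderiv ℝ (fun y => fderiv ℝ q y (e2 i)) x (e2 i) := by
    intro i
    rw [← coord_fderiv _ x hFd i (e2 i)]
    have hco : (fun z => ((q z ^ 2) • gradient (fun z' => (q z')⁻¹ * u z' j) z) i)
        = fun z => q z ^ 2 * fderiv ℝ (fun z' => (q z')⁻¹ * u z' j) z (e2 i) := by
      funext z
      simp only [PiLp.smul_apply, smul_eq_mul, grad_coord]
    rw [hco]
    have hee : (fun z => q z ^ 2 * fderiv ℝ (fun z' => (q z')⁻¹ * u z' j) z (e2 i)) =ᶠ[𝓝 x]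
        (fun z => q z * fderiv ℝ (fun z' => u z' j) z (e2 i)
          - u z j * fderiv ℝ q z (e2 i)) := by
      filter_upwards [hUx] with z hz
      exact hqv j z hz i
    rw [hee.fderiv_eq, fderiv_fun_sub (f := fun z => q z * fderiv ℝ (fun z' => u z' j) z (e2 i))
      (g := fun z => u z j * fderiv ℝ q z (e2 i)) ((hdq x hx).mul (hdu' j i)) ((hduk j x hx).mul (hdq' i)),
      fderiv_fun_mul (hdq x hx) (hdu' j i), fderiv_fun_mul (hduk j x hx) (hdq' i)]
    simp only [ContinuousLinearMap.sub_apply, ContinuousLinearMap.add_apply,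
      ContinuousLinearMap.smul_apply, smul_eq_mul]
    ring
  -- gradSq of the inverted map
  have hinvd : DifferentiableAt ℝ (invmap u) x := by
    have hre : invmap u = fun y => (q y)⁻¹ • u y := by
      funext y; rw [invmap, hqnorm y]
    rw [hre]
    exact ((hdq x hx).inv hqx0).smul (hdu x hx)
  have hgs : gradSq (invmap u) x
      = (∑ i : Fin 2, ∑ k, fderiv ℝ (fun z => u z k) x (e2 i)
          * fderiv ℝ (fun z => u z k) x (e2 i)) / q x ^ 2 := by
    rw [gradSq, Finset.sum_div]
    refine Finset.sum_congr rfl fun i _ => ?_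
    rw [normsq]
    have hco : ∀ k : Fin (n+1), fderiv ℝ (invmap u) x (e2 i) k
        = fderiv ℝ (fun z => (q z)⁻¹ * u z k) x (e2 i) := by
      intro k
      rw [← coord_fderiv (invmap u) x hinvd k (e2 i), hinv_fun k]
    have hdv : ∀ k : Fin (n+1), fderiv ℝ (fun z => (q z)⁻¹ * u z k) x (e2 i)
        = (q x * fderiv ℝ (fun z => u z k) x (e2 i) - u x k * fderiv ℝ q x (e2 i)) / q x ^ 2 := by
      intro k
      have h := hqv k x hx i
      rw [eq_div_iff (pow_ne_zero 2 hqx0), ← h]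
      ring
    rw [Finset.sum_congr rfl fun k _ => by rw [hco k, hdv k]]
    have ha : fderiv ℝ q x (e2 i) = 2 * ∑ k, u x k * fderiv ℝ (fun z => u z k) x (e2 i) := by
      rw [hdq_val x hx i, Finset.mul_sum]
      exact Finset.sum_congr rfl fun k _ => by ring
    have hq2 : ∑ k, u x k * u x k = q x := (hq_app x).symm
    have expand : ∑ k, ((q x * fderiv ℝ (fun z => u z k) x (e2 i)
            - u x k * fderiv ℝ q x (e2 i)) / q x ^ 2)
          * ((q x * fderiv ℝ (fun z => u z k) x (e2 i)
            - u x k * fderiv ℝ q x (e2 i)) / q x ^ 2)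
        = (q x ^ 2 * (∑ k, fderiv ℝ (fun z => u z k) x (e2 i)
              * fderiv ℝ (fun z => u z k) x (e2 i))
            - 2 * q x * fderiv ℝ q x (e2 i)
              * (∑ k, u x k * fderiv ℝ (fun z => u z k) x (e2 i))
            + fderiv ℝ q x (e2 i) ^ 2 * (∑ k, u x k * u x k)) / (q x ^ 2 * q x ^ 2) := by
      calc ∑ k, ((q x * fderiv ℝ (fun z => u z k) x (e2 i)
              - u x k * fderiv ℝ q x (e2 i)) / q x ^ 2)
            * ((q x * fderiv ℝ (fun z => u z k) x (e2 i)
              - u x k * fderiv ℝ q x (e2 i)) / q x ^ 2)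
          = ∑ k, (q x ^ 2 * (fderiv ℝ (fun z => u z k) x (e2 i)
                * fderiv ℝ (fun z => u z k) x (e2 i))
              - 2 * q x * fderiv ℝ q x (e2 i)
                * (u x k * fderiv ℝ (fun z => u z k) x (e2 i))
              + fderiv ℝ q x (e2 i) ^ 2 * (u x k * u x k)) / (q x ^ 2 * q x ^ 2) := by
            refine Finset.sum_congr rfl fun k _ => ?_
            field_simp
            ring
        _ = ((∑ k, q x ^ 2 * (fderiv ℝ (fun z => u z k) x (e2 i)
                * fderiv ℝ (fun z => u z k) x (e2 i)))
              - (∑ k, 2 * q x * fderiv ℝ q x (e2 i)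
                * (u x k * fderiv ℝ (fun z => u z k) x (e2 i)))
              + ∑ k, fderiv ℝ q x (e2 i) ^ 2 * (u x k * u x k)) / (q x ^ 2 * q x ^ 2) := by
            rw [← Finset.sum_div, Finset.sum_add_distrib, Finset.sum_sub_distrib]
        _ = (q x ^ 2 * (∑ k, fderiv ℝ (fun z => u z k) x (e2 i)
                * fderiv ℝ (fun z => u z k) x (e2 i))
              - 2 * q x * fderiv ℝ q x (e2 i)
                * (∑ k, u x k * fderiv ℝ (fun z => u z k) x (e2 i))
              + fderiv ℝ q x (e2 i) ^ 2 * (∑ k, u x k * u x k)) / (q x ^ 2 * q x ^ 2) := by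
            rw [← Finset.mul_sum, ← Finset.mul_sum, ← Finset.mul_sum]
    rw [expand, hq2, ha]
    field_simp
    ring
  -- norms of the inverted map at x
  have hn6 : ‖invmap u x‖ ^ 6 = (q x ^ 3)⁻¹ := by
    have h6 : ‖u x‖ ^ 6 = q x ^ 3 := by rw [← hqnorm x]; ring
    rw [hnormv x, mul_pow, h6]
    field_simp
  -- assemble
  rw [hFrw, divE, Finset.sum_congr rfl fun i _ => key i, Finset.sum_sub_distrib,
    ← Finset.mul_sum, ← Finset.mul_sum, hA j, hB, hgs, hn6, hinv_app x j]
  field_simp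
  ring
end
end
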